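/- For natural numbers q > k > 1, define μ(q,k) := (q^q/((q−k)^{q−k} · k^k))^{1/k}. Then μ(q,k) < μ(q−1,k−1). Equivalently, the function ρ ↦ ρ^ρ/(ρ−1)^{ρ−1} is strictly increasing on (1, ∞) and μ(q,k) equals this function evaluated at ρ = q/k, with q/k < (q−1)/(k−1). -/

import Mathlib

/-- `μ(q,k) := (q^q/((q-k)^(q-k) k^k))^(1/k)`. -/
noncomputable def muQK (q k : ℕ) : ℝ :=
  ((q : ℝ) ^ q / (((q - k : ℕ) : ℝ) ^ (q - k) * (k : ℝ) ^ k)) ^ ((1 : ℝ) / k)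

private lemma gAux_strictMono :
    StrictMonoOn (fun ρ : ℝ => ρ * Real.log ρ - (ρ - 1) * Real.log (ρ - 1))
      (Set.Ioi (1 : ℝ)) := by
  have h : ∀ x ∈ interior (Set.Ioi (1 : ℝ)),
      HasDerivAt (fun ρ : ℝ => ρ * Real.log ρ - (ρ - 1) * Real.log (ρ - 1))
        (Real.log x - Real.log (x - 1)) x := by
    intro x hx
    rw [interior_Ioi] at hx
    have hx1 : (1 : ℝ) < x := hx
    have hx0 : (0 : ℝ) < x := lt_trans one_pos hx1
    have hxm : (0 : ℝ) < x - 1 := sub_pos.2 hx1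
    have h1 : HasDerivAt (fun ρ : ℝ => ρ * Real.log ρ) (Real.log x + 1) x := by
      have := (hasDerivAt_id x).mul (Real.hasDerivAt_log hx0.ne')
      simpa [Pi.mul_def, hx0.ne'] using this
    have h2 : HasDerivAt (fun ρ : ℝ => (ρ - 1) * Real.log (ρ - 1))
        (Real.log (x - 1) + 1) x := by
      have hi : HasDerivAt (fun ρ : ℝ => ρ - 1) 1 x := (hasDerivAt_id x).sub_const 1
      have hin : HasDerivAt (fun y : ℝ => y * Real.log y) (Real.log (x - 1) + 1) (x - 1) := by
        have := (hasDerivAt_id (x - 1)).mul (Real.hasDerivAt_log hxm.ne')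
        simpa [Pi.mul_def, hxm.ne'] using this
      have := hin.comp x hi
      simpa [Function.comp_def] using this
    have := h1.sub h2
    simpa [Pi.sub_def] using this
  have hderiv : ∀ x ∈ interior (Set.Ioi (1 : ℝ)),
      0 < deriv (fun ρ : ℝ => ρ * Real.log ρ - (ρ - 1) * Real.log (ρ - 1)) x := by
    intro x hx
    rw [(h x hx).deriv]
    rw [interior_Ioi] at hx
    have hx1 : (1 : ℝ) < x := hx
    have hxm : (0 : ℝ) < x - 1 := sub_pos.2 hx1
    have : Real.log (x - 1) < Real.log x := Real.log_lt_log hxm (by linarith)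
    linarith
  apply strictMonoOn_of_deriv_pos (convex_Ioi 1) _ hderiv
  have h' : ∀ x ∈ Set.Ioi (1:ℝ), HasDerivAt
      (fun ρ : ℝ => ρ * Real.log ρ - (ρ - 1) * Real.log (ρ - 1))
      (Real.log x - Real.log (x - 1)) x := by
    simpa [interior_Ioi] using h
  exact fun x hx => ((h' x hx).continuousAt).continuousWithinAt

private lemma fAux_strictMono :
    StrictMonoOn (fun ρ : ℝ => ρ ^ ρ / (ρ - 1) ^ (ρ - 1)) (Set.Ioi (1 : ℝ)) := by
  have hrep : ∀ x ∈ Set.Ioi (1 : ℝ), x ^ x / (x - 1) ^ (x - 1)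
      = Real.exp (x * Real.log x - (x - 1) * Real.log (x - 1)) := by
    intro x hx
    have hx1 : (1 : ℝ) < x := hx
    have hx0 : (0 : ℝ) < x := lt_trans one_pos hx1
    have hxm : (0 : ℝ) < x - 1 := sub_pos.2 hx1
    rw [Real.rpow_def_of_pos hx0, Real.rpow_def_of_pos hxm, ← Real.exp_sub]
    ring_nf
  intro x hx y hy hxy
  simp only []
  rw [hrep x hx, hrep y hy]
  exact Real.exp_lt_exp.2 (gAux_strictMono hx hy hxy)

private lemma muQK_eq (q k : ℕ) (hk : 1 ≤ k) (hkq : k < q) :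
    muQK q k = ((q : ℝ) / k) ^ ((q : ℝ) / k) / ((q : ℝ) / k - 1) ^ ((q : ℝ) / k - 1) := by
  have hkR : (0 : ℝ) < k := Nat.cast_pos.2 hk
  have hqR : (0 : ℝ) < q := Nat.cast_pos.2 (by omega)
  have hcR : (0 : ℝ) < (q : ℝ) - k := sub_pos.2 (by exact_mod_cast hkq)
  have hck : ((q - k : ℕ) : ℝ) = (q : ℝ) - k := by
    rw [Nat.cast_sub hkq.le]
  have hρ1 : (1 : ℝ) < (q : ℝ) / k := (one_lt_div hkR).2 (by exact_mod_cast hkq)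
  have hρ0 : (0 : ℝ) < (q : ℝ) / k := lt_trans one_pos hρ1
  have hρm : (0 : ℝ) < (q : ℝ) / k - 1 := sub_pos.2 hρ1
  unfold muQK
  rw [hck, ← Real.rpow_natCast ((q : ℝ)) q, ← Real.rpow_natCast ((q : ℝ) - k) (q - k),
    ← Real.rpow_natCast ((k : ℝ)) k, hck]
  have hinner : (0 : ℝ) < (q : ℝ) ^ (q : ℝ) / (((q : ℝ) - k) ^ ((q : ℝ) - k) * (k : ℝ) ^ (k : ℝ)) := by
    positivity
  rw [Real.rpow_def_of_pos hinner,
    Real.log_div (by positivity) (by positivity),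
    Real.log_mul (by positivity) (by positivity),
    Real.log_rpow hqR, Real.log_rpow hcR, Real.log_rpow hkR,
    Real.rpow_def_of_pos hρ0, Real.rpow_def_of_pos hρm, ← Real.exp_sub]
  congr 1
  rw [show (q : ℝ) / k - 1 = ((q : ℝ) - k) / k by field_simp]
  rw [Real.log_div hqR.ne' hkR.ne', Real.log_div hcR.ne' hkR.ne']
  field_simp
  ring

theorem muQK_strict_decrease
    (q k : ℕ) (hk : 1 < k) (hkq : k < q) :
    muQK q k < muQK (q - 1) (k - 1) ∧
    StrictMonoOn (fun ρ : ℝ => ρ ^ ρ / (ρ - 1) ^ (ρ - 1)) (Set.Ioi (1 : ℝ)) ∧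
    muQK q k = ((q : ℝ) / k) ^ ((q : ℝ) / k) / ((q : ℝ) / k - 1) ^ ((q : ℝ) / k - 1) ∧
    (q : ℝ) / k < ((q - 1 : ℕ) : ℝ) / ((k - 1 : ℕ) : ℝ) := by
  have hkR : (0 : ℝ) < k := Nat.cast_pos.2 (by omega)
  have hk1R : (0 : ℝ) < ((k - 1 : ℕ) : ℝ) := Nat.cast_pos.2 (by omega)
  have hkqR : (k : ℝ) < q := by exact_mod_cast hkq
  have e1 := muQK_eq q k hk.le hkq
  have e2 := muQK_eq (q - 1) (k - 1) (by omega) (by omega)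
  have hρ1 : (1 : ℝ) < (q : ℝ) / k := (one_lt_div hkR).2 hkqR
  have hρ2 : (1 : ℝ) < ((q - 1 : ℕ) : ℝ) / ((k - 1 : ℕ) : ℝ) :=
    (one_lt_div hk1R).2 (by exact_mod_cast (by omega : k - 1 < q - 1))
  have hlt : (q : ℝ) / k < ((q - 1 : ℕ) : ℝ) / ((k - 1 : ℕ) : ℝ) := by
    rw [div_lt_div_iff₀ hkR hk1R, Nat.cast_sub (by omega : 1 ≤ q),
      Nat.cast_sub (by omega : 1 ≤ k)]
    push_cast
    nlinarith
  refine ⟨?_, fAux_strictMono, e1, hlt⟩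
  rw [e1, e2]
  exact fAux_strictMono (Set.mem_Ioi.2 hρ1) (Set.mem_Ioi.2 hρ2) hlt
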